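/- The curvature enclosure converges to zero: for fixed i ≥ 0, bounded sets X₀ ⊂ ℝⁿ and vector ũ ∈ ℝⁿ, the set C_i(Δt) = (e^{AΔt})^i (F(Δt) X₀ ⊕ G(Δt) ũ) converges to {0} as Δt → 0, where F(Δt) = T^{(κ)}(Δt) A ⊕ E(Δt) and G(Δt) = T^{(κ+1)}(Δt) ⊕ E(Δt)Δt, with T^{(o)}(Δt) = ⊕ⱼ₌₂^o [(j^{−j/(j−1)} − j^{−1/(1−j)·(−1)}) Δtʲ, 0] A^{j−1}/j! an interval matrix whose entries scale like Δtʲ, and E(Δt) the Taylor remainder interval matrix. -/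

import Mathlib

section AuxExp

attribute [local instance] Matrix.linftyOpNormedAddCommGroup Matrix.linftyOpNormedRing
  Matrix.linftyOpNormedAlgebra

theorem aux_exp_entry_continuous (n : ℕ) (A : Matrix (Fin n) (Fin n) ℝ) (i : ℕ) (a b : Fin n) :
    Continuous (fun Δt : ℝ => ((NormedSpace.exp (Δt • A)) ^ i) a b) := by
  have h1 : Continuous (fun Δt : ℝ => NormedSpace.exp (Δt • A)) :=
    NormedSpace.exp_continuous.comp (continuous_id.smul continuous_const)
  have h2 : Continuous (fun Δt : ℝ => (NormedSpace.exp (Δt • A)) ^ i) := h1.pow i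
  exact (continuous_apply b).comp ((continuous_apply a).comp h2)

end AuxExp

/-- The curvature enclosure converges to zero: if `F(Δt)` and `G(Δt)` are interval matrices
whose lower and upper bound matrices converge entrywise to `0` as `Δt → 0`, then for fixed
`i ≥ 0`, a bounded set `X₀` and a vector `ũ`, the set
`C_i(Δt) = (e^{AΔt})^i (F(Δt) X₀ ⊕ G(Δt) ũ)` is contained in arbitrarily small balls around
`0` for sufficiently small `Δt > 0`. -/
theorem curvature_enclosure_tendsto_zero (n : ℕ) (A : Matrix (Fin n) (Fin n) ℝ) (i : ℕ)
    (X₀ : Set (Fin n → ℝ)) (hX₀ : Bornology.IsBounded X₀) (hX₀ne : X₀.Nonempty)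
    (u : Fin n → ℝ)
    (Flo Fhi Glo Ghi : ℝ → Matrix (Fin n) (Fin n) ℝ)
    (hFlo : ∀ a b : Fin n, Filter.Tendsto (fun Δt => Flo Δt a b) (nhds 0) (nhds 0))
    (hFhi : ∀ a b : Fin n, Filter.Tendsto (fun Δt => Fhi Δt a b) (nhds 0) (nhds 0))
    (hGlo : ∀ a b : Fin n, Filter.Tendsto (fun Δt => Glo Δt a b) (nhds 0) (nhds 0))
    (hGhi : ∀ a b : Fin n, Filter.Tendsto (fun Δt => Ghi Δt a b) (nhds 0) (nhds 0)) :
    ∀ ε > 0, ∃ δ > 0, ∀ Δt : ℝ, 0 < Δt → Δt < δ →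
      {y : Fin n → ℝ | ∃ (M N : Matrix (Fin n) (Fin n) ℝ) (x : Fin n → ℝ),
          (∀ a b, Flo Δt a b ≤ M a b ∧ M a b ≤ Fhi Δt a b) ∧
          (∀ a b, Glo Δt a b ≤ N a b ∧ N a b ≤ Ghi Δt a b) ∧
          x ∈ X₀ ∧
          y = ((NormedSpace.exp (Δt • A)) ^ i).mulVec (M.mulVec x + N.mulVec u)}
        ⊆ Metric.ball (0 : Fin n → ℝ) ε := by
  intro ε hε
  obtain ⟨R, hR⟩ := hX₀.exists_norm_le
  obtain ⟨x₀, hx₀⟩ := hX₀ne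
  have hR0 : 0 ≤ R := le_trans (norm_nonneg x₀) (hR x₀ hx₀)
  -- Uniform bound on entries of the exponential matrix power near Δt = 0
  set E : ℝ → Matrix (Fin n) (Fin n) ℝ := fun Δt => (NormedSpace.exp (Δt • A)) ^ i with hEdef
  set K : ℝ := 1 + ∑ a : Fin n, ∑ b : Fin n, |E 0 a b| with hKdef
  have hK0 : 0 < K := by
    have : 0 ≤ ∑ a : Fin n, ∑ b : Fin n, |E 0 a b| :=
      Finset.sum_nonneg fun a _ => Finset.sum_nonneg fun b _ => abs_nonneg _
    linarith
  have hEbound : ∀ᶠ Δt in nhds (0 : ℝ), ∀ a b : Fin n, |E Δt a b| ≤ K := by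
    rw [Filter.eventually_all]
    intro a
    rw [Filter.eventually_all]
    intro b
    have hc : Continuous (fun Δt : ℝ => E Δt a b) := aux_exp_entry_continuous n A i a b
    have hlt : |E 0 a b| < K := by
      have h1 : |E 0 a b| ≤ ∑ a : Fin n, ∑ b : Fin n, |E 0 a b| := by
        calc |E 0 a b| ≤ ∑ b : Fin n, |E 0 a b| :=
              Finset.single_le_sum (f := fun b => |E 0 a b|)
                (fun c _ => abs_nonneg _) (Finset.mem_univ b)
          _ ≤ ∑ a : Fin n, ∑ b : Fin n, |E 0 a b| :=
              Finset.single_le_sum (f := fun a => ∑ b : Fin n, |E 0 a b|)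
                (fun c _ => Finset.sum_nonneg fun d _ => abs_nonneg _) (Finset.mem_univ a)
      linarith
    have hopen : IsOpen {y : ℝ | |y| < K} := isOpen_lt continuous_abs continuous_const
    exact ((hc.tendsto 0).eventually (hopen.eventually_mem hlt)).mono fun t ht => le_of_lt ht
  -- Choose the entrywise bound η on the interval matrices
  set D : ℝ := (n : ℝ) * (n : ℝ) * K * (R + ‖u‖) with hDdef
  have hD0 : 0 ≤ D := by positivity
  set η : ℝ := ε / (2 * (D + 1)) with hηdef
  have hη0 : 0 < η := by positivity
  have hsmall : ∀ (f : ℝ → Matrix (Fin n) (Fin n) ℝ),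
      (∀ a b : Fin n, Filter.Tendsto (fun Δt => f Δt a b) (nhds 0) (nhds 0)) →
      ∀ᶠ Δt in nhds (0 : ℝ), ∀ a b : Fin n, |f Δt a b| < η := by
    intro f hf
    rw [Filter.eventually_all]
    intro a
    rw [Filter.eventually_all]
    intro b
    have hopen : IsOpen {y : ℝ | |y| < η} := isOpen_lt continuous_abs continuous_const
    have h0 : |(0 : ℝ)| < η := by simpa using hη0
    exact (hf a b).eventually (hopen.eventually_mem h0)
  have hall : ∀ᶠ Δt in nhds (0 : ℝ),
      (∀ a b : Fin n, |E Δt a b| ≤ K) ∧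
      (∀ a b : Fin n, |Flo Δt a b| < η) ∧ (∀ a b : Fin n, |Fhi Δt a b| < η) ∧
      (∀ a b : Fin n, |Glo Δt a b| < η) ∧ (∀ a b : Fin n, |Ghi Δt a b| < η) :=
    hEbound.and ((hsmall Flo hFlo).and ((hsmall Fhi hFhi).and
      ((hsmall Glo hGlo).and (hsmall Ghi hGhi))))
  rw [Metric.eventually_nhds_iff] at hall
  obtain ⟨δ, hδ0, hδ⟩ := hall
  refine ⟨δ, hδ0, fun Δt hΔt1 hΔt2 => ?_⟩
  have hΔt : dist Δt (0 : ℝ) < δ := by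
    rw [Real.dist_eq, sub_zero, abs_of_pos hΔt1]; exact hΔt2
  obtain ⟨hE, hF1, hF2, hG1, hG2⟩ := hδ hΔt
  intro y hy
  obtain ⟨M, N, x, hM, hN, hx, hyeq⟩ := hy
  -- entrywise bounds on M and N
  have hMb : ∀ a b : Fin n, |M a b| ≤ η := fun a b =>
    abs_le.mpr ⟨by linarith [(hM a b).1, neg_abs_le (Flo Δt a b), hF1 a b],
      by linarith [(hM a b).2, le_abs_self (Fhi Δt a b), hF2 a b]⟩
  have hNb : ∀ a b : Fin n, |N a b| ≤ η := fun a b =>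
    abs_le.mpr ⟨by linarith [(hN a b).1, neg_abs_le (Glo Δt a b), hG1 a b],
      by linarith [(hN a b).2, le_abs_self (Ghi Δt a b), hG2 a b]⟩
  -- bound on the vector v = M x + N u
  set v : Fin n → ℝ := M.mulVec x + N.mulVec u with hvdef
  have hxb : ∀ b : Fin n, |x b| ≤ R := fun b =>
    le_trans (norm_le_pi_norm x b) (hR x hx)
  have hub : ∀ b : Fin n, |u b| ≤ ‖u‖ := fun b => norm_le_pi_norm u b
  have hvb : ∀ b : Fin n, |v b| ≤ (n : ℝ) * η * (R + ‖u‖) := by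
    intro b
    have h1 : |(M.mulVec x) b| ≤ (n : ℝ) * η * R := by
      calc |(M.mulVec x) b| = |∑ c : Fin n, M b c * x c| := by rfl
        _ ≤ ∑ c : Fin n, |M b c * x c| := Finset.abs_sum_le_sum_abs _ _
        _ ≤ ∑ c : Fin n, η * R := Finset.sum_le_sum fun c _ => by
              rw [abs_mul]
              exact mul_le_mul (hMb b c) (hxb c) (abs_nonneg _) (le_of_lt hη0)
        _ = (n : ℝ) * (η * R) := by simp [Finset.sum_const, mul_comm]
        _ = (n : ℝ) * η * R := by ring
    have h2 : |(N.mulVec u) b| ≤ (n : ℝ) * η * ‖u‖ := by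
      calc |(N.mulVec u) b| = |∑ c : Fin n, N b c * u c| := by rfl
        _ ≤ ∑ c : Fin n, |N b c * u c| := Finset.abs_sum_le_sum_abs _ _
        _ ≤ ∑ c : Fin n, η * ‖u‖ := Finset.sum_le_sum fun c _ => by
              rw [abs_mul]
              exact mul_le_mul (hNb b c) (hub c) (abs_nonneg _) (le_of_lt hη0)
        _ = (n : ℝ) * (η * ‖u‖) := by simp [Finset.sum_const, mul_comm]
        _ = (n : ℝ) * η * ‖u‖ := by ring
    calc |v b| ≤ |(M.mulVec x) b| + |(N.mulVec u) b| := abs_add_le _ _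
      _ ≤ (n : ℝ) * η * R + (n : ℝ) * η * ‖u‖ := add_le_add h1 h2
      _ = (n : ℝ) * η * (R + ‖u‖) := by ring
  -- bound on each entry of y
  have hyb : ∀ a : Fin n, |y a| ≤ η * D := by
    intro a
    have : y a = ∑ b : Fin n, E Δt a b * v b := by rw [hyeq]; rfl
    rw [this]
    calc |∑ b : Fin n, E Δt a b * v b| ≤ ∑ b : Fin n, |E Δt a b * v b| :=
          Finset.abs_sum_le_sum_abs _ _
      _ ≤ ∑ b : Fin n, K * ((n : ℝ) * η * (R + ‖u‖)) := Finset.sum_le_sum fun b _ => by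
            rw [abs_mul]
            exact mul_le_mul (hE a b) (hvb b) (abs_nonneg _) (le_of_lt hK0)
      _ = (n : ℝ) * (K * ((n : ℝ) * η * (R + ‖u‖))) := by simp [Finset.sum_const, mul_comm]
      _ = η * D := by rw [hDdef]; ring
  have hηD : η * D < ε := by
    have h1 : η * D ≤ η * (D + 1) := by nlinarith
    have h2 : η * (D + 1) = ε / 2 := by
      rw [hηdef]; field_simp
    nlinarith
  rw [Metric.mem_ball, dist_zero_right]
  rcases isEmpty_or_nonempty (Fin n) with h | h
  · have : y = 0 := funext fun a => absurd (Nonempty.intro a) (by simpa using h)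
    rw [this, norm_zero]; exact hε
  · rw [pi_norm_lt_iff hε]
    intro a
    calc ‖y a‖ = |y a| := rfl
      _ ≤ η * D := hyb a
      _ < ε := hηD
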